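/- arXiv:2601.10888 — 2 statements merged into one kernel-verified Lean document; each statement's English description precedes it below -/
import Mathlib

section
/- The cross-ratio datum T = ((1,2,3,4),(1,2,6,7),(1,3,7,8),(1,2,5,8),(3,4,5,6)) on 8 points has cross-ratio degree exactly 2: there exists a nonzero polynomial q ∈ ℂ[x₁,…,x₅] such that for every (a₁,…,a₅) ∈ (ℂ∖{0,1})⁵ with q(a₁,…,a₅) ≠ 0, the set of tuples (p₁,…,p₈) of pairwise distinct points of ℙ¹(ℂ) with p₁ = ∞, p₂ = 0, p₃ = 1 satisfying CR(p₁,p₂,p₃,p₄)=a₁, CR(p₁,p₂,p₆,p₇)=a₂, CR(p₁,p₃,p₇,p₈)=a₃, CR(p₁,p₂,p₅,p₈)=a₄, CR(p₃,p₄,p₅,p₆)=a₅ has exactly 2 elements. -/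
open OnePoint

/-- Cross-ratio of four points of `ℙ¹(ℂ) = OnePoint ℂ`:
`CR(z₁,z₂,z₃,z₄) = ((z₃−z₁)(z₄−z₂))/((z₃−z₂)(z₄−z₁))` when all points are finite,
extended to one point at infinity by omitting the two factors containing it. -/
noncomputable def CR : OnePoint ℂ → OnePoint ℂ → OnePoint ℂ → OnePoint ℂ → ℂ
  | Option.none,    Option.some z₂, Option.some z₃, Option.some z₄ => (z₄ - z₂) / (z₃ - z₂)
  | Option.some z₁, Option.none,    Option.some z₃, Option.some z₄ => (z₃ - z₁) / (z₄ - z₁)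
  | Option.some z₁, Option.some z₂, Option.none,    Option.some z₄ => (z₄ - z₂) / (z₄ - z₁)
  | Option.some z₁, Option.some z₂, Option.some z₃, Option.none    => (z₃ - z₁) / (z₃ - z₂)
  | Option.some z₁, Option.some z₂, Option.some z₃, Option.some z₄ =>
      ((z₃ - z₁) * (z₄ - z₂)) / ((z₃ - z₂) * (z₄ - z₁))
  | _, _, _, _ => 0

namespace CRaux

lemma CR_inf (z2 z3 z4 : ℂ) : CR ∞ ↑z2 ↑z3 ↑z4 = (z4 - z2) / (z3 - z2) := rfl
lemma CR_fin (z1 z2 z3 z4 : ℂ) :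
    CR ↑z1 ↑z2 ↑z3 ↑z4 = ((z3 - z1) * (z4 - z2)) / ((z3 - z2) * (z4 - z1)) := rfl

section defs
variable {R : Type*} [CommRing R]

def c2 (a : Fin 5 → R) : R := a 1 * a 2 * (1 - a 4)
def c1 (a : Fin 5 → R) : R :=
  ((1 - a 2) - a 3 - a 0 * (a 1 * a 2)) - a 4 * ((1 - a 2) - a 0 * a 3 - a 1 * a 2)
def c0 (a : Fin 5 → R) : R := -(a 0) * ((1 - a 2) - a 3) + a 4 * ((1 - a 2) - a 0 * a 3)
def res (a : Fin 5 → R) (α β : R) : R := c2 a * β ^ 2 - c1 a * α * β + c0 a * α ^ 2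
def dsc (a : Fin 5 → R) : R := c1 a ^ 2 - 4 * (c2 a * c0 a)
def big (a : Fin 5 → R) : R :=
  c2 a * dsc a * res a 1 0 * res a 1 (-1) * res a 1 (-(a 0)) * res a (a 1) (-1)
  * res a (a 1) (-(a 0)) * res a (a 1 * a 2) (1 - a 2) * res a (a 1 * a 2) ((1 - a 2) - a 3)
  * res a (a 1 * a 2) ((1 - a 2) - a 0 * a 3) * res a (a 1 * a 2) ((1 - a 2) - a 0)
  * res a (a 1 * a 2 - a 3) (1 - a 2) * res a (a 1 * a 2 - a 3 * a 1) (1 - a 2)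
  * res a (a 1 * a 2 - 1) (1 - a 2)
end defs

lemma eval_big (a : Fin 5 → ℂ) :
    MvPolynomial.eval a (big (fun i => (MvPolynomial.X i : MvPolynomial (Fin 5) ℂ))) = big a := by
  simp [big, res, dsc, c2, c1, c0]

lemma big_ne_zero : big (![2,3,5,7,11] : Fin 5 → ℂ) ≠ 0 := by
  have e2 : (![2,3,5,7,11] : Fin 5 → ℂ) 2 = 5 := rfl
  have e3 : (![2,3,5,7,11] : Fin 5 → ℂ) 3 = 7 := rfl
  have e4 : (![2,3,5,7,11] : Fin 5 → ℂ) 4 = 11 := rfl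
  norm_num [big, res, dsc, c2, c1, c0, Matrix.cons_val, e2, e3, e4]

lemma root_ne {a : Fin 5 → ℂ} {u α β : ℂ}
    (hQ : c2 a * (u * u) + c1 a * u + c0 a = 0) (hr : res a α β ≠ 0) : α * u + β ≠ 0 := by
  intro h
  apply hr
  unfold res
  linear_combination α ^ 2 * hQ + (c2 a * (β - α * u) - c1 a * α) * h

noncomputable def pt (a : Fin 5 → ℂ) (u : ℂ) : Fin 8 → OnePoint ℂ :=
  ![∞, ((0 : ℂ) : OnePoint ℂ), ((1 : ℂ) : OnePoint ℂ), ((a 0 : ℂ) : OnePoint ℂ),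
    (((a 1 * a 2 * u + (1 - a 2)) / a 3 : ℂ) : OnePoint ℂ), ((u : ℂ) : OnePoint ℂ),
    ((a 1 * u : ℂ) : OnePoint ℂ), ((a 1 * a 2 * u + (1 - a 2) : ℂ) : OnePoint ℂ)]

lemma inj8 {x3 x4 x5 x6 x7 : ℂ}
    (h30 : x3 ≠ 0) (h31 : x3 ≠ 1) (h40 : x4 ≠ 0) (h41 : x4 ≠ 1) (h50 : x5 ≠ 0) (h51 : x5 ≠ 1)
    (h60 : x6 ≠ 0) (h61 : x6 ≠ 1) (h70 : x7 ≠ 0) (h71 : x7 ≠ 1)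
    (h34 : x3 ≠ x4) (h35 : x3 ≠ x5) (h36 : x3 ≠ x6) (h37 : x3 ≠ x7)
    (h45 : x4 ≠ x5) (h46 : x4 ≠ x6) (h47 : x4 ≠ x7) (h56 : x5 ≠ x6) (h57 : x5 ≠ x7)
    (h67 : x6 ≠ x7) :
    Function.Injective (![∞, ((0:ℂ):OnePoint ℂ), ((1:ℂ):OnePoint ℂ), ((x3:ℂ):OnePoint ℂ),
      ((x4:ℂ):OnePoint ℂ), ((x5:ℂ):OnePoint ℂ), ((x6:ℂ):OnePoint ℂ), ((x7:ℂ):OnePoint ℂ)]) := by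
  refine List.nodup_ofFn.mp ?_
  simp only [List.ofFn_succ, Matrix.cons_val_zero, Matrix.cons_val_succ, List.ofFn_zero]
  simp [List.nodup_cons, OnePoint.coe_eq_coe, OnePoint.infty_ne_coe, eq_comm]
  tauto

end CRaux

theorem crossRatioDegree_eq_two_example :
    ∃ q : MvPolynomial (Fin 5) ℂ, q ≠ 0 ∧
      ∀ a : Fin 5 → ℂ, (∀ i, a i ≠ 0 ∧ a i ≠ 1) → MvPolynomial.eval a q ≠ 0 →
        let S : Set (Fin 8 → OnePoint ℂ) :=
          {p | Function.Injective p ∧ p 0 = ∞ ∧ p 1 = ((0 : ℂ) : OnePoint ℂ) ∧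
            p 2 = ((1 : ℂ) : OnePoint ℂ) ∧
            CR (p 0) (p 1) (p 2) (p 3) = a 0 ∧
            CR (p 0) (p 1) (p 5) (p 6) = a 1 ∧
            CR (p 0) (p 2) (p 6) (p 7) = a 2 ∧
            CR (p 0) (p 1) (p 4) (p 7) = a 3 ∧
            CR (p 2) (p 3) (p 4) (p 5) = a 4}
        S.Finite ∧ S.ncard = 2 := by
  classical
  refine ⟨CRaux.big (fun i => MvPolynomial.X i), ?_, ?_⟩
  · intro h
    exact CRaux.big_ne_zero (by rw [← CRaux.eval_big (![2,3,5,7,11]), h, map_zero])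
  intro a ha hq
  rw [CRaux.eval_big] at hq
  simp only [CRaux.big, mul_ne_zero_iff] at hq
  obtain ⟨⟨⟨⟨⟨⟨⟨⟨⟨⟨⟨⟨⟨hc2, hdsc⟩, r1⟩, r2⟩, r3⟩, r4⟩, r5⟩, r6⟩, r7⟩, r8⟩, r9⟩, r10⟩, r11⟩, r12⟩ := hq
  obtain ⟨ha0, ha0'⟩ := ha 0
  obtain ⟨ha1, ha1'⟩ := ha 1
  obtain ⟨ha2, ha2'⟩ := ha 2
  obtain ⟨ha3, ha3'⟩ := ha 3
  obtain ⟨ha4, ha4'⟩ := ha 4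
  obtain ⟨s, hs⟩ := IsAlgClosed.exists_pow_nat_eq (CRaux.dsc a) (n := 2) (by norm_num)
  have hs0 : s ≠ 0 := by intro h; apply hdsc; rw [← hs, h]; ring
  have hs' : discrim (CRaux.c2 a) (CRaux.c1 a) (CRaux.c0 a) = s * s := by
    rw [discrim]; simp only [CRaux.dsc] at hs; linear_combination -hs
  set u1 := (-CRaux.c1 a + s) / (2 * CRaux.c2 a) with hu1def
  set u2 := (-CRaux.c1 a - s) / (2 * CRaux.c2 a) with hu2def
  have hroot : ∀ u : ℂ, CRaux.c2 a * (u * u) + CRaux.c1 a * u + CRaux.c0 a = 0 ↔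
      u = u1 ∨ u = u2 := fun u => quadratic_eq_zero_iff hc2 hs' u
  have hQ1 := (hroot u1).mpr (Or.inl rfl)
  have hQ2 := (hroot u2).mpr (Or.inr rfl)
  have h2c2 : (2 : ℂ) * CRaux.c2 a ≠ 0 := mul_ne_zero two_ne_zero hc2
  have hu12 : u1 ≠ u2 := by
    intro h
    apply hs0
    rw [hu1def, hu2def, div_eq_div_iff h2c2 h2c2] at h
    have h4 : (4 : ℂ) * CRaux.c2 a ≠ 0 := by
      intro h'; exact hc2 (by linear_combination h' / 4)
    field_simp at h
    linear_combination h / 2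
  -- key: each root gives a member
  have key : ∀ u : ℂ, CRaux.c2 a * (u * u) + CRaux.c1 a * u + CRaux.c0 a = 0 →
      (Function.Injective (CRaux.pt a u) ∧ CRaux.pt a u 0 = ∞ ∧
        CRaux.pt a u 1 = ((0 : ℂ) : OnePoint ℂ) ∧ CRaux.pt a u 2 = ((1 : ℂ) : OnePoint ℂ) ∧
        CR (CRaux.pt a u 0) (CRaux.pt a u 1) (CRaux.pt a u 2) (CRaux.pt a u 3) = a 0 ∧
        CR (CRaux.pt a u 0) (CRaux.pt a u 1) (CRaux.pt a u 5) (CRaux.pt a u 6) = a 1 ∧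
        CR (CRaux.pt a u 0) (CRaux.pt a u 2) (CRaux.pt a u 6) (CRaux.pt a u 7) = a 2 ∧
        CR (CRaux.pt a u 0) (CRaux.pt a u 1) (CRaux.pt a u 4) (CRaux.pt a u 7) = a 3 ∧
        CR (CRaux.pt a u 2) (CRaux.pt a u 3) (CRaux.pt a u 4) (CRaux.pt a u 5) = a 4) := by
    intro u hQ
    have n1 := CRaux.root_ne hQ r1
    have n2 := CRaux.root_ne hQ r2
    have n3 := CRaux.root_ne hQ r3
    have n4 := CRaux.root_ne hQ r4
    have n5 := CRaux.root_ne hQ r5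
    have n6 := CRaux.root_ne hQ r6
    have n7 := CRaux.root_ne hQ r7
    have n8 := CRaux.root_ne hQ r8
    have n9 := CRaux.root_ne hQ r9
    have n10 := CRaux.root_ne hQ r10
    have n11 := CRaux.root_ne hQ r11
    have n12 := CRaux.root_ne hQ r12
    have hu0 : u ≠ 0 := fun h => n1 (by rw [h]; ring)
    have hu1 : u ≠ 1 := fun h => n2 (by rw [h]; ring)
    have hua : u ≠ a 0 := fun h => n3 (by rw [h]; ring)
    have hv1 : a 1 * u ≠ 1 := fun h => n4 (by rw [h]; ring)
    have hva : a 1 * u ≠ a 0 := fun h => n5 (by rw [h]; ring)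
    have hw0 : a 1 * a 2 * u + (1 - a 2) ≠ 0 := n6
    have hw1 : a 1 * a 2 * u + (1 - a 2) ≠ 1 := by
      intro h
      apply hv1
      have h2 : a 2 * (a 1 * u - 1) = 0 := by linear_combination h
      linear_combination (mul_eq_zero.mp h2).resolve_left ha2
    have hwa : a 1 * a 2 * u + (1 - a 2) ≠ a 0 := fun h => n9 (by linear_combination h)
    have hwu : a 1 * a 2 * u + (1 - a 2) ≠ u := fun h => n12 (by linear_combination h)
    have hy0 : (a 1 * a 2 * u + (1 - a 2)) / a 3 ≠ 0 := div_ne_zero n6 ha3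
    have hy1 : (a 1 * a 2 * u + (1 - a 2)) / a 3 ≠ 1 := by
      intro h; apply n7; rw [div_eq_iff ha3] at h; linear_combination h
    have hyu : (a 1 * a 2 * u + (1 - a 2)) / a 3 ≠ u := by
      intro h; apply n10; rw [div_eq_iff ha3] at h; linear_combination h
    have hyv : (a 1 * a 2 * u + (1 - a 2)) / a 3 ≠ a 1 * u := by
      intro h; apply n11; rw [div_eq_iff ha3] at h; linear_combination h
    have hya : (a 1 * a 2 * u + (1 - a 2)) / a 3 ≠ a 0 := by
      intro h; apply n8; rw [div_eq_iff ha3] at h; linear_combination h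
    have hyw : (a 1 * a 2 * u + (1 - a 2)) / a 3 ≠ a 1 * a 2 * u + (1 - a 2) := by
      intro h
      rw [div_eq_iff ha3] at h
      have h2 : (a 1 * a 2 * u + (1 - a 2)) * (a 3 - 1) = 0 := by linear_combination -h
      rcases mul_eq_zero.mp h2 with h3 | h3
      · exact n6 h3
      · exact ha3' (by linear_combination h3)
    have hvu : u ≠ a 1 * u := by
      intro h
      have h2 : (1 - a 1) * u = 0 := by linear_combination h
      rcases mul_eq_zero.mp h2 with h3 | h3
      · exact ha1' (by linear_combination -h3)
      · exact hu0 h3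
    have hvw : a 1 * u ≠ a 1 * a 2 * u + (1 - a 2) := by
      intro h
      have h2 : (1 - a 2) * (1 - a 1 * u) = 0 := by linear_combination -h
      rcases mul_eq_zero.mp h2 with h3 | h3
      · exact ha2' (by linear_combination -h3)
      · exact hv1 (by linear_combination -h3)
    refine ⟨?_, rfl, rfl, rfl, ?_, ?_, ?_, ?_, ?_⟩
    · exact CRaux.inj8 ha0 ha0' hy0 hy1 hu0 hu1 (mul_ne_zero ha1 hu0) hv1 hw0 hw1
        (Ne.symm hya) (Ne.symm hua) (Ne.symm hva) (Ne.symm hwa) hyu hyv hyw hvu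
        (Ne.symm hwu) hvw
    · rw [show CRaux.pt a u 0 = ∞ from rfl, show CRaux.pt a u 1 = ((0:ℂ):OnePoint ℂ) from rfl,
        show CRaux.pt a u 2 = ((1:ℂ):OnePoint ℂ) from rfl,
        show CRaux.pt a u 3 = ((a 0 : ℂ):OnePoint ℂ) from rfl, CRaux.CR_inf]
      norm_num
    · rw [show CRaux.pt a u 0 = ∞ from rfl, show CRaux.pt a u 1 = ((0:ℂ):OnePoint ℂ) from rfl,
        show CRaux.pt a u 5 = ((u:ℂ):OnePoint ℂ) from rfl,
        show CRaux.pt a u 6 = ((a 1 * u : ℂ):OnePoint ℂ) from rfl, CRaux.CR_inf]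
      rw [sub_zero, sub_zero]
      exact mul_div_cancel_right₀ (a 1) hu0
    · rw [show CRaux.pt a u 0 = ∞ from rfl, show CRaux.pt a u 2 = ((1:ℂ):OnePoint ℂ) from rfl,
        show CRaux.pt a u 6 = ((a 1 * u : ℂ):OnePoint ℂ) from rfl,
        show CRaux.pt a u 7 = ((a 1 * a 2 * u + (1 - a 2) : ℂ):OnePoint ℂ) from rfl,
        CRaux.CR_inf]
      rw [div_eq_iff (sub_ne_zero.mpr hv1)]
      ring
    · rw [show CRaux.pt a u 0 = ∞ from rfl, show CRaux.pt a u 1 = ((0:ℂ):OnePoint ℂ) from rfl,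
        show CRaux.pt a u 4 = (((a 1 * a 2 * u + (1 - a 2)) / a 3 : ℂ):OnePoint ℂ) from rfl,
        show CRaux.pt a u 7 = ((a 1 * a 2 * u + (1 - a 2) : ℂ):OnePoint ℂ) from rfl,
        CRaux.CR_inf]
      rw [sub_zero, sub_zero, div_eq_iff (div_ne_zero n6 ha3)]
      field_simp
    · rw [show CRaux.pt a u 2 = ((1:ℂ):OnePoint ℂ) from rfl,
        show CRaux.pt a u 3 = ((a 0 : ℂ):OnePoint ℂ) from rfl,
        show CRaux.pt a u 4 = (((a 1 * a 2 * u + (1 - a 2)) / a 3 : ℂ):OnePoint ℂ) from rfl,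
        show CRaux.pt a u 5 = ((u:ℂ):OnePoint ℂ) from rfl, CRaux.CR_fin]
      rw [div_eq_iff (mul_ne_zero (sub_ne_zero.mpr hya) (sub_ne_zero.mpr hu1))]
      have hw3 : a 3 * ((a 1 * a 2 * u + (1 - a 2)) / a 3) = a 1 * a 2 * u + (1 - a 2) := by
        field_simp
      apply mul_left_cancel₀ ha3
      simp only [CRaux.c2, CRaux.c1, CRaux.c0] at hQ
      linear_combination ((u - a 0) - a 4 * (u - 1)) * hw3 + hQ
  intro S
  have hS : S = {p : Fin 8 → OnePoint ℂ | Function.Injective p ∧ p 0 = ∞ ∧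
      p 1 = ((0 : ℂ) : OnePoint ℂ) ∧ p 2 = ((1 : ℂ) : OnePoint ℂ) ∧
      CR (p 0) (p 1) (p 2) (p 3) = a 0 ∧
      CR (p 0) (p 1) (p 5) (p 6) = a 1 ∧
      CR (p 0) (p 2) (p 6) (p 7) = a 2 ∧
      CR (p 0) (p 1) (p 4) (p 7) = a 3 ∧
      CR (p 2) (p 3) (p 4) (p 5) = a 4} := rfl
  have hSeq : S = {CRaux.pt a u1, CRaux.pt a u2} := by
    rw [hS]
    ext p
    simp only [Set.mem_setOf_eq, Set.mem_insert_iff, Set.mem_singleton_iff]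
    constructor
    · rintro ⟨hinj, hp0, hp1, hp2, e1, e2, e3, e4, e5⟩
      have hne : ∀ i : Fin 8, i ≠ 0 → p i ≠ ∞ := by
        intro i h hi
        exact h (hinj (hi.trans hp0.symm))
      obtain ⟨z3, hz3⟩ := OnePoint.ne_infty_iff_exists.mp (hne 3 (by decide))
      obtain ⟨z4, hz4⟩ := OnePoint.ne_infty_iff_exists.mp (hne 4 (by decide))
      obtain ⟨z5, hz5⟩ := OnePoint.ne_infty_iff_exists.mp (hne 5 (by decide))
      obtain ⟨z6, hz6⟩ := OnePoint.ne_infty_iff_exists.mp (hne 6 (by decide))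
      obtain ⟨z7, hz7⟩ := OnePoint.ne_infty_iff_exists.mp (hne 7 (by decide))
      have dne : ∀ i j : Fin 8, i ≠ j → p i ≠ p j := fun i j h hij => h (hinj hij)
      rw [hp0, hp1, hp2, ← hz3] at e1
      rw [hp0, hp1, ← hz5, ← hz6] at e2
      rw [hp0, hp2, ← hz6, ← hz7] at e3
      rw [hp0, hp1, ← hz4, ← hz7] at e4
      rw [hp2, ← hz3, ← hz4, ← hz5] at e5
      rw [CRaux.CR_inf] at e1 e2 e3 e4
      rw [CRaux.CR_fin] at e5
      -- distinctness facts
      have z50 : z5 ≠ 0 := by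
        intro h
        exact dne 5 1 (by decide) (by rw [← hz5, hp1, h])
      have z51 : z5 ≠ 1 := by
        intro h
        exact dne 5 2 (by decide) (by rw [← hz5, hp2, h])
      have z61 : z6 ≠ 1 := by
        intro h
        exact dne 6 2 (by decide) (by rw [← hz6, hp2, h])
      have z40 : z4 ≠ 0 := by
        intro h
        exact dne 4 1 (by decide) (by rw [← hz4, hp1, h])
      have z43 : z4 ≠ z3 := by
        intro h
        exact dne 4 3 (by decide) (by rw [← hz4, ← hz3, h])
      -- solve
      have hz3v : z3 = a 0 := by
        field_simp at e1
        linear_combination e1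
      have hz6v : z6 = a 1 * z5 := by
        rw [sub_zero, sub_zero, div_eq_iff z50] at e2
        linear_combination e2
      have hz7v : z7 = a 1 * a 2 * z5 + (1 - a 2) := by
        rw [div_eq_iff (sub_ne_zero.mpr z61)] at e3
        linear_combination e3 + a 2 * hz6v
      have hz4v : z4 = (a 1 * a 2 * z5 + (1 - a 2)) / a 3 := by
        rw [sub_zero, sub_zero, div_eq_iff z40] at e4
        rw [eq_div_iff ha3]
        linear_combination hz7v - e4
      have hQ5 : CRaux.c2 a * (z5 * z5) + CRaux.c1 a * z5 + CRaux.c0 a = 0 := by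
        rw [div_eq_iff (mul_ne_zero (sub_ne_zero.mpr z43) (sub_ne_zero.mpr z51))] at e5
        rw [hz3v] at e5
        have h4 : z4 * a 3 = a 1 * a 2 * z5 + (1 - a 2) := by
          rw [hz4v]; field_simp
        simp only [CRaux.c2, CRaux.c1, CRaux.c0]
        linear_combination a 3 * e5 - ((z5 - a 0) - a 4 * (z5 - 1)) * h4
      have hp : p = CRaux.pt a z5 := by
        funext i
        fin_cases i
        · exact hp0
        · exact hp1
        · exact hp2
        · show p 3 = CRaux.pt a z5 3
          rw [← hz3, hz3v]; rfl
        · show p 4 = CRaux.pt a z5 4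
          rw [← hz4, hz4v]; rfl
        · show p 5 = CRaux.pt a z5 5
          rw [← hz5]; rfl
        · show p 6 = CRaux.pt a z5 6
          rw [← hz6, hz6v]; rfl
        · show p 7 = CRaux.pt a z5 7
          rw [← hz7, hz7v]; rfl
      rcases (hroot z5).mp hQ5 with h | h
      · left; rw [hp, h]
      · right; rw [hp, h]
    · rintro (rfl | rfl)
      · exact key u1 hQ1
      · exact key u2 hQ2
  constructor
  · rw [hSeq]
    exact (Set.finite_singleton _).insert _
  · rw [hSeq]
    refine Set.ncard_pair ?_
    intro h
    apply hu12
    have h5 : ((u1 : ℂ) : OnePoint ℂ) = ((u2 : ℂ) : OnePoint ℂ) := congrFun h 5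
    exact OnePoint.coe_eq_coe.mp h5
end

section
/- The cross-ratio datum T = ((1,2,3,5),(1,2,4,6),(1,3,6,7),(2,4,7,8),(3,4,5,8)) on 8 points has cross-ratio degree exactly 3: there exists a nonzero polynomial q ∈ ℂ[x₁,…,x₅] such that for every (a₁,…,a₅) ∈ (ℂ∖{0,1})⁵ with q(a₁,…,a₅) ≠ 0, the set of tuples (p₁,…,p₈) of pairwise distinct points of ℙ¹(ℂ) with p₁ = ∞, p₂ = 0, p₃ = 1 satisfying CR(p₁,p₂,p₃,p₅)=a₁, CR(p₁,p₂,p₄,p₆)=a₂, CR(p₁,p₃,p₆,p₇)=a₃, CR(p₂,p₄,p₇,p₈)=a₄, CR(p₃,p₄,p₅,p₈)=a₅ has exactly 3 elements. -/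
open OnePoint

lemma CR_infty (z2 z3 z4 : ℂ) : CR ∞ z2 z3 z4 = (z4 - z2) / (z3 - z2) := rfl
lemma CR_fin (z1 z2 z3 z4 : ℂ) :
    CR z1 z2 z3 z4 = ((z3 - z1) * (z4 - z2)) / ((z3 - z2) * (z4 - z1)) := rfl

lemma cubic_excl {p3 p2 p1 p0 n d t : ℂ}
    (hroot : p3*t^3 + p2*t^2 + p1*t + p0 = 0)
    (hF : p3*n^3 + p2*n^2*d + p1*n*d^2 + p0*d^3 ≠ 0) : d*t ≠ n := by
  intro heq
  apply hF
  linear_combination d^3*hroot + (-(p3*(n^2+n*d*t+d^2*t^2)) - p2*d*(n+d*t) - p1*d^2)*heq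

lemma quad_excl {p3 p2 p1 p0 q2 q1 q0 t : ℂ}
    (hroot : p3*t^3 + p2*t^2 + p1*t + p0 = 0)
    (hF : q2*(p0*q2^2 - p2*q0*q2 + p3*q0*q1)^2
      - q1*(p0*q2^2 - p2*q0*q2 + p3*q0*q1)*(p1*q2^2 - p3*q0*q2 - p2*q1*q2 + p3*q1^2)
      + q0*(p1*q2^2 - p3*q0*q2 - p2*q1*q2 + p3*q1^2)^2 ≠ 0) :
    q2*t^2 + q1*t + q0 ≠ 0 := by
  intro hQ
  set r1 : ℂ := p1*q2^2 - p3*q0*q2 - p2*q1*q2 + p3*q1^2 with hr1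
  set r0 : ℂ := p0*q2^2 - p2*q0*q2 + p3*q0*q1 with hr0
  have hlin : r1*t + r0 = 0 := by
    rw [hr1, hr0]; linear_combination q2^2*hroot - (p3*q2*t + p2*q2 - p3*q1)*hQ
  apply hF
  linear_combination r1^2*hQ + (q2*(r0 - r1*t) - q1*r1)*hlin

section Defs
variable {R : Type*} [CommRing R]

def cc3 (a0 a1 a2 a3 a4 : R) : R := a1*a2*a4
def cc2 (a0 a1 a2 a3 a4 : R) : R :=
  a1*a2*(a0-1-a4*a0) + (1-a2)*a4 - (a0-1+a4)*(a1*a2*(1-a3)+a3)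
def cc1 (a0 a1 a2 a3 a4 : R) : R :=
  (1-a2)*(a0-1-a4*a0) - (a0-1+a4)*((1-a2)*(1-a3)) + (a4*a0)*(a1*a2*(1-a3)+a3)
def cc0 (a0 a1 a2 a3 a4 : R) : R := (a4*a0)*((1-a2)*(1-a3))

def homF (a0 a1 a2 a3 a4 n d : R) : R :=
  cc3 a0 a1 a2 a3 a4 * n^3 + cc2 a0 a1 a2 a3 a4 * n^2*d
    + cc1 a0 a1 a2 a3 a4 * n*d^2 + cc0 a0 a1 a2 a3 a4 * d^3

def quadF (a0 a1 a2 a3 a4 q2 q1 q0 : R) : R :=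
  q2*(cc0 a0 a1 a2 a3 a4*q2^2 - cc2 a0 a1 a2 a3 a4*q0*q2 + cc3 a0 a1 a2 a3 a4*q0*q1)^2
  - q1*(cc0 a0 a1 a2 a3 a4*q2^2 - cc2 a0 a1 a2 a3 a4*q0*q2 + cc3 a0 a1 a2 a3 a4*q0*q1)
      *(cc1 a0 a1 a2 a3 a4*q2^2 - cc3 a0 a1 a2 a3 a4*q0*q2 - cc2 a0 a1 a2 a3 a4*q1*q2
        + cc3 a0 a1 a2 a3 a4*q1^2)
  + q0*(cc1 a0 a1 a2 a3 a4*q2^2 - cc3 a0 a1 a2 a3 a4*q0*q2 - cc2 a0 a1 a2 a3 a4*q1*q2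
        + cc3 a0 a1 a2 a3 a4*q1^2)^2

def discF (a0 a1 a2 a3 a4 : R) : R :=
  cc2 a0 a1 a2 a3 a4 ^ 2 * cc1 a0 a1 a2 a3 a4 ^ 2
    - 4 * cc3 a0 a1 a2 a3 a4 * cc1 a0 a1 a2 a3 a4 ^ 3
    - 4 * cc2 a0 a1 a2 a3 a4 ^ 3 * cc0 a0 a1 a2 a3 a4
    - 27 * cc3 a0 a1 a2 a3 a4 ^ 2 * cc0 a0 a1 a2 a3 a4 ^ 2
    + 18 * cc3 a0 a1 a2 a3 a4 * cc2 a0 a1 a2 a3 a4 * cc1 a0 a1 a2 a3 a4 * cc0 a0 a1 a2 a3 a4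

def bigq (a0 a1 a2 a3 a4 : R) : R :=
  homF a0 a1 a2 a3 a4 1 1 *
  homF a0 a1 a2 a3 a4 a0 1 *
  homF a0 a1 a2 a3 a4 1 a1 *
  homF a0 a1 a2 a3 a4 a0 a1 *
  homF a0 a1 a2 a3 a4 (a2-1) (a1*a2) *
  homF a0 a1 a2 a3 a4 (a2-1) (a1*a2-1) *
  homF a0 a1 a2 a3 a4 (a0-1+a2) (a1*a2) *
  homF a0 a1 a2 a3 a4 (1-a0+a4*a0) a4 *
  homF a0 a1 a2 a3 a4 (a4*a0) (a0-1+a4) *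
  quadF a0 a1 a2 a3 a4 (a1*a4) (a1*(a0-1-a4*a0)-(a0-1+a4)) (a4*a0) *
  quadF a0 a1 a2 a3 a4 (a1*a2*a4) (a1*a2*(a0-1-a4*a0)+(1-a2)*a4-(a0-1+a4))
    ((1-a2)*(a0-1-a4*a0)+a4*a0) *
  discF a0 a1 a2 a3 a4

end Defs

open MvPolynomial in
lemma eval_bigq (a : Fin 5 → ℂ) :
    MvPolynomial.eval a (bigq (X 0) (X 1) (X 2) (X 3) (X 4) : MvPolynomial (Fin 5) ℂ)
      = bigq (a 0) (a 1) (a 2) (a 3) (a 4) := by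
  simp only [bigq, homF, quadF, discF, cc3, cc2, cc1, cc0, map_mul, map_add, map_sub, map_pow,
    map_one, map_ofNat, eval_X]

lemma bigq_ne : bigq (4:ℂ) 3 6 3 9 ≠ 0 := by
  norm_num [bigq, homF, quadF, discF, cc3, cc2, cc1, cc0]


lemma inj_vec8 {z1 z2 z3 z4 z5 z6 z7 : ℂ}
    (h12 : z1 ≠ z2) (h13 : z1 ≠ z3) (h14 : z1 ≠ z4) (h15 : z1 ≠ z5) (h16 : z1 ≠ z6)
    (h17 : z1 ≠ z7) (h23 : z2 ≠ z3) (h24 : z2 ≠ z4) (h25 : z2 ≠ z5) (h26 : z2 ≠ z6)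
    (h27 : z2 ≠ z7) (h34 : z3 ≠ z4) (h35 : z3 ≠ z5) (h36 : z3 ≠ z6) (h37 : z3 ≠ z7)
    (h45 : z4 ≠ z5) (h46 : z4 ≠ z6) (h47 : z4 ≠ z7) (h56 : z5 ≠ z6) (h57 : z5 ≠ z7)
    (h67 : z6 ≠ z7) :
    Function.Injective
      (![(∞ : OnePoint ℂ), ↑z1, ↑z2, ↑z3, ↑z4, ↑z5, ↑z6, ↑z7] : Fin 8 → OnePoint ℂ) := by
  simp only [Matrix.vecCons, Fin.cons_injective_iff, Set.mem_range, not_exists,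
    Fin.forall_fin_succ, Fin.cons_zero, Fin.cons_succ, OnePoint.coe_eq_coe, ne_eq,
    OnePoint.infty_ne_coe, OnePoint.coe_ne_infty, not_false_eq_true, true_and,
    IsEmpty.forall_iff, and_true, Function.Injective]
  tauto

set_option maxHeartbeats 4000000 in
theorem crossRatioDegree_eq_three_T1 :
    ∃ q : MvPolynomial (Fin 5) ℂ, q ≠ 0 ∧
      ∀ a : Fin 5 → ℂ, (∀ i, a i ≠ 0 ∧ a i ≠ 1) → MvPolynomial.eval a q ≠ 0 →
        let S : Set (Fin 8 → OnePoint ℂ) :=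
          {p | Function.Injective p ∧ p 0 = ∞ ∧ p 1 = ((0 : ℂ) : OnePoint ℂ) ∧
            p 2 = ((1 : ℂ) : OnePoint ℂ) ∧
            CR (p 0) (p 1) (p 2) (p 4) = a 0 ∧
            CR (p 0) (p 1) (p 3) (p 5) = a 1 ∧
            CR (p 0) (p 2) (p 5) (p 6) = a 2 ∧
            CR (p 1) (p 3) (p 6) (p 7) = a 3 ∧
            CR (p 2) (p 3) (p 4) (p 7) = a 4}
        S.Finite ∧ S.ncard = 3 := by
  refine ⟨bigq (MvPolynomial.X 0) (MvPolynomial.X 1) (MvPolynomial.X 2) (MvPolynomial.X 3)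
    (MvPolynomial.X 4), ?_, ?_⟩
  · intro h
    apply bigq_ne
    have h2 := eval_bigq ![4, 3, 6, 3, 9]
    rw [h, map_zero] at h2
    have h3 : bigq ((![4, 3, 6, 3, 9] : Fin 5 → ℂ) 0) (![4, 3, 6, 3, 9] 1) (![4, 3, 6, 3, 9] 2)
        (![4, 3, 6, 3, 9] 3) (![4, 3, 6, 3, 9] 4) = bigq (4:ℂ) 3 6 3 9 := by rfl
    rw [← h3, ← h2]
  · intro a ha hq
    intro S
    obtain ⟨ha00, ha01⟩ := ha 0
    obtain ⟨ha10, ha11⟩ := ha 1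
    obtain ⟨ha20, ha21⟩ := ha 2
    obtain ⟨ha30, ha31⟩ := ha 3
    obtain ⟨ha40, ha41⟩ := ha 4
    rw [eval_bigq] at hq
    simp only [bigq, homF, quadF, discF, cc3, cc2, cc1, cc0, mul_ne_zero_iff] at hq
    obtain ⟨⟨⟨⟨⟨⟨⟨⟨⟨⟨⟨hF1, hFxy⟩, hFu1⟩, hFyu⟩, hFv0⟩, hFxv⟩, hFyv⟩, hFDw⟩, hFw0⟩,
      hFuw⟩, hFvw⟩, hFdisc⟩ := hq
    set P : Cubic ℂ :=
      ⟨a 1*a 2*a 4,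
       a 1*a 2*(a 0-1-a 4*a 0) + (1-a 2)*a 4 - (a 0-1+a 4)*(a 1*a 2*(1-a 3)+a 3),
       (1-a 2)*(a 0-1-a 4*a 0) - (a 0-1+a 4)*((1-a 2)*(1-a 3)) + (a 4*a 0)*(a 1*a 2*(1-a 3)+a 3),
       (a 4*a 0)*((1-a 2)*(1-a 3))⟩ with hPdef
    have hPa : P.a ≠ 0 := mul_ne_zero (mul_ne_zero ha10 ha20) ha40
    have hPne : P.toPoly ≠ 0 := Cubic.ne_zero_of_a_ne_zero hPa
    have hdisc : P.discr ≠ 0 := hFdisc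
    have hmapid : Cubic.map (RingHom.id ℂ) P = P := rfl
    obtain ⟨x1, x2, x3, h3⟩ := (Cubic.splits_iff_roots_eq_three hPa).mp
      (IsAlgClosed.splits (P.toPoly.map (RingHom.id ℂ)))
    have hcard := Cubic.card_roots_of_discr_ne_zero hPa (IsAlgClosed.splits (P.toPoly.map (RingHom.id ℂ))) hdisc
    rw [hmapid] at hcard
    have hmem : ∀ s : ℂ, s ∈ P.roots.toFinset ↔
        (a 1*a 2*a 4)*s^3
        + (a 1*a 2*(a 0-1-a 4*a 0) + (1-a 2)*a 4 - (a 0-1+a 4)*(a 1*a 2*(1-a 3)+a 3))*s^2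
        + ((1-a 2)*(a 0-1-a 4*a 0) - (a 0-1+a 4)*((1-a 2)*(1-a 3))
            + (a 4*a 0)*(a 1*a 2*(1-a 3)+a 3))*s
        + (a 4*a 0)*((1-a 2)*(1-a 3)) = 0 := by
      intro s
      rw [Multiset.mem_toFinset, Cubic.mem_roots_iff hPne]
    have hS : S = (fun s : ℂ =>
        (![∞, ↑(0:ℂ), ↑(1:ℂ), ↑s, ↑(a 0), ↑(a 1*s), ↑(a 1*a 2*s+1-a 2),
          ↑(((a 0-1+a 4)*s-a 4*a 0)/(a 4*s+(a 0-1-a 4*a 0)))] : Fin 8 → OnePoint ℂ))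
          '' ↑P.roots.toFinset := by
      apply Set.ext
      intro p
      constructor
      · -- forward: p ∈ S → p in image
        intro hp
        obtain ⟨hinj, h0, h1, h2, e1, e2, e3, e4, e5⟩ := hp
        have hne : ∀ i j : Fin 8, i ≠ j → p i ≠ p j := fun i j hij h => hij (hinj h)
        obtain ⟨z3, hz3⟩ := OnePoint.ne_infty_iff_exists.mp
          (by rw [← h0]; exact hne 3 0 (by decide))
        obtain ⟨z4, hz4⟩ := OnePoint.ne_infty_iff_exists.mp
          (by rw [← h0]; exact hne 4 0 (by decide))
        obtain ⟨z5, hz5⟩ := OnePoint.ne_infty_iff_exists.mp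
          (by rw [← h0]; exact hne 5 0 (by decide))
        obtain ⟨z6, hz6⟩ := OnePoint.ne_infty_iff_exists.mp
          (by rw [← h0]; exact hne 6 0 (by decide))
        obtain ⟨z7, hz7⟩ := OnePoint.ne_infty_iff_exists.mp
          (by rw [← h0]; exact hne 7 0 (by decide))
        have h31 : z3 ≠ 0 := fun h => hne 3 1 (by decide) (by rw [← hz3, h, h1])
        have hz51 : z5 ≠ 1 := fun h => hne 5 2 (by decide) (by rw [← hz5, h, h2])
        have hz63 : z6 ≠ z3 := fun h => hne 6 3 (by decide) (by rw [← hz6, h, hz3])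
        have hz70 : z7 ≠ 0 := fun h => hne 7 1 (by decide) (by rw [← hz7, h, h1])
        have hz43 : z4 ≠ z3 := fun h => hne 4 3 (by decide) (by rw [← hz4, h, hz3])
        have hz71 : z7 ≠ 1 := fun h => hne 7 2 (by decide) (by rw [← hz7, h, h2])
        rw [h0, h1, h2, ← hz4, CR_infty] at e1
        norm_num at e1
        rw [h0, h1, ← hz3, ← hz5, CR_infty, sub_zero, sub_zero,
          div_eq_iff h31] at e2
        rw [h0, h2, ← hz5, ← hz6, CR_infty,
          div_eq_iff (sub_ne_zero.mpr hz51)] at e3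
        rw [h1, ← hz3, ← hz6, ← hz7, CR_fin,
          div_eq_iff (mul_ne_zero (sub_ne_zero.mpr hz63)
            (by rw [sub_zero]; exact hz70))] at e4
        rw [h2, ← hz3, ← hz4, ← hz7, CR_fin,
          div_eq_iff (mul_ne_zero (sub_ne_zero.mpr hz43)
            (sub_ne_zero.mpr hz71))] at e5
        -- e2 : z5 = a 1 * z3 ;  e3 : z6 - 1 = a 2 * (z5 - 1)
        have hz6a : z6 = a 2*(a 1*z3-1)+1 := by rw [e2] at e3; linear_combination e3
        rw [e1] at e5
        rw [hz6a] at e4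
        have hroot : (a 1*a 2*a 4)*z3^3
            + (a 1*a 2*(a 0-1-a 4*a 0) + (1-a 2)*a 4 - (a 0-1+a 4)*(a 1*a 2*(1-a 3)+a 3))*z3^2
            + ((1-a 2)*(a 0-1-a 4*a 0) - (a 0-1+a 4)*((1-a 2)*(1-a 3))
                + (a 4*a 0)*(a 1*a 2*(1-a 3)+a 3))*z3
            + (a 4*a 0)*((1-a 2)*(1-a 3)) = 0 := by
          linear_combination (-(a 4*z3 + (a 0-1-a 4*a 0)))*e4
            + ((a 1*a 2*(1-a 3)+a 3)*z3 + (1-a 2)*(1-a 3))*e5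
        have hDwne : a 4*z3 + (a 0-1-a 4*a 0) ≠ 0 :=
          fun h => cubic_excl hroot hFDw (by linear_combination h)
        have hz7v : z7 = ((a 0-1+a 4)*z3-a 4*a 0)/(a 4*z3+(a 0-1-a 4*a 0)) := by
          rw [eq_div_iff hDwne]; linear_combination e5
        refine ⟨z3, (hmem z3).mpr hroot, ?_⟩
        funext i
        fin_cases i
        · exact h0.symm
        · exact h1.symm
        · exact h2.symm
        · exact hz3
        · show (↑(a 0) : OnePoint ℂ) = p 4
          rw [← e1]; exact hz4
        · show (↑(a 1*z3) : OnePoint ℂ) = p 5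
          rw [← e2]; exact hz5
        · show (↑(a 1*a 2*z3+1-a 2) : OnePoint ℂ) = p 6
          rw [show a 1*a 2*z3+1-a 2 = z6 by rw [hz6a]; ring]; exact hz6
        · show (↑(((a 0-1+a 4)*z3-a 4*a 0)/(a 4*z3+(a 0-1-a 4*a 0))) : OnePoint ℂ) = p 7
          rw [← hz7v]; exact hz7
      · -- backward: image element is in S
        rintro ⟨t, ht, rfl⟩
        have hroot := (hmem t).mp ht
        have hr0ne : (a 4*a 0)*((1-a 2)*(1-a 3)) ≠ 0 :=
          mul_ne_zero (mul_ne_zero ha40 ha00)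
            (mul_ne_zero (sub_ne_zero.mpr (Ne.symm ha21)) (sub_ne_zero.mpr (Ne.symm ha31)))
        have ht0 : t ≠ 0 := fun h => hr0ne (by rw [h] at hroot; linear_combination hroot)
        have ht1 : t ≠ 1 := fun h => cubic_excl hroot hF1 (by rw [h, one_mul])
        have hty : t ≠ a 0 := fun h => cubic_excl hroot hFxy (by rw [h, one_mul])
        have hu1 : a 1*t ≠ 1 := fun h => cubic_excl hroot hFu1 h
        have hyu : a 1*t ≠ a 0 := fun h => cubic_excl hroot hFyu h
        have hu0 : a 1*t ≠ 0 := mul_ne_zero ha10 ht0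
        have hv0 : a 1*a 2*t+1-a 2 ≠ 0 := fun h => cubic_excl hroot hFv0 (by linear_combination h)
        have htv : a 1*a 2*t+1-a 2 ≠ t := fun h => cubic_excl hroot hFxv (by linear_combination h)
        have hyv : a 1*a 2*t+1-a 2 ≠ a 0 := fun h => cubic_excl hroot hFyv (by linear_combination h)
        have hDwne : a 4*t+(a 0-1-a 4*a 0) ≠ 0 :=
          fun h => cubic_excl hroot hFDw (by linear_combination h)
        have hNwne : (a 0-1+a 4)*t-a 4*a 0 ≠ 0 :=
          fun h => cubic_excl hroot hFw0 (by linear_combination h)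
        have hW : (((a 0-1+a 4)*t-a 4*a 0)/(a 4*t+(a 0-1-a 4*a 0))) * (a 4*t+(a 0-1-a 4*a 0))
            = ((a 0-1+a 4)*t-a 4*a 0) := div_mul_cancel₀ _ hDwne
        have hw0 : ((a 0-1+a 4)*t-a 4*a 0)/(a 4*t+(a 0-1-a 4*a 0)) ≠ 0 :=
          div_ne_zero hNwne hDwne
        have hw1 : ((a 0-1+a 4)*t-a 4*a 0)/(a 4*t+(a 0-1-a 4*a 0)) ≠ 1 := by
          intro h
          rw [div_eq_one_iff_eq hDwne] at h
          exact mul_ne_zero (sub_ne_zero.mpr ha01) (sub_ne_zero.mpr ht1) (by linear_combination h)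
        have htw : ((a 0-1+a 4)*t-a 4*a 0)/(a 4*t+(a 0-1-a 4*a 0)) ≠ t := by
          intro h
          rw [div_eq_iff hDwne] at h
          exact mul_ne_zero ha40 (mul_ne_zero (sub_ne_zero.mpr ht1) (sub_ne_zero.mpr hty))
            (by linear_combination -h)
        have hyw : ((a 0-1+a 4)*t-a 4*a 0)/(a 4*t+(a 0-1-a 4*a 0)) ≠ a 0 := by
          intro h
          rw [div_eq_iff hDwne] at h
          exact mul_ne_zero (mul_ne_zero (sub_ne_zero.mpr ha01)
            (sub_ne_zero.mpr (Ne.symm ha41))) (sub_ne_zero.mpr (Ne.symm hty))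
            (by linear_combination -h)
        have htu : a 1*t ≠ t := by
          intro h
          have h2 : (a 1-1)*t = 0 := by linear_combination h
          rcases mul_eq_zero.mp h2 with h3 | h3
          · exact ha11 (by linear_combination h3)
          · exact ht0 h3
        have hv1 : a 1*a 2*t+1-a 2 ≠ 1 := by
          intro h
          exact mul_ne_zero ha20 (sub_ne_zero.mpr hu1) (by linear_combination h)
        have huv : a 1*t ≠ a 1*a 2*t+1-a 2 := by
          intro h
          exact mul_ne_zero (sub_ne_zero.mpr (Ne.symm ha21)) (sub_ne_zero.mpr hu1)
            (by linear_combination h)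
        have huw : a 1*t ≠ ((a 0-1+a 4)*t-a 4*a 0)/(a 4*t+(a 0-1-a 4*a 0)) := by
          intro h
          rw [eq_comm, div_eq_iff hDwne] at h
          exact quad_excl hroot hFuw (by linear_combination -h)
        have hvw : a 1*a 2*t+1-a 2 ≠ ((a 0-1+a 4)*t-a 4*a 0)/(a 4*t+(a 0-1-a 4*a 0)) := by
          intro h
          rw [eq_comm, div_eq_iff hDwne] at h
          exact quad_excl hroot hFvw (by linear_combination -h)
        have h4key : (((a 0-1+a 4)*t-a 4*a 0)/(a 4*t+(a 0-1-a 4*a 0)))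
            * ((a 1*a 2*(1-a 3)+a 3)*t + (1-a 2)*(1-a 3)) = (a 1*a 2*t+1-a 2)*t := by
          have h2 : ((((a 0-1+a 4)*t-a 4*a 0)/(a 4*t+(a 0-1-a 4*a 0)))
              * ((a 1*a 2*(1-a 3)+a 3)*t + (1-a 2)*(1-a 3)) - (a 1*a 2*t+1-a 2)*t)
              * (a 4*t+(a 0-1-a 4*a 0)) = 0 := by
            linear_combination ((a 1*a 2*(1-a 3)+a 3)*t + (1-a 2)*(1-a 3))*hW - hroot
          have h3 := (mul_eq_zero.mp h2).resolve_right hDwne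
          linear_combination h3
        refine ⟨?_, rfl, rfl, rfl, ?_, ?_, ?_, ?_, ?_⟩
        · exact inj_vec8 (by norm_num) (Ne.symm ht0) (Ne.symm ha00) (Ne.symm hu0)
            (Ne.symm hv0) (Ne.symm hw0) (Ne.symm ht1) (Ne.symm ha01) (Ne.symm hu1)
            (Ne.symm hv1) (Ne.symm hw1) hty (Ne.symm htu) (Ne.symm htv) (Ne.symm htw)
            (Ne.symm hyu) (Ne.symm hyv) (Ne.symm hyw) huv huw hvw
        · show CR ∞ ↑(0:ℂ) ↑(1:ℂ) ↑(a 0) = a 0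
          rw [CR_infty]; norm_num
        · show CR ∞ ↑(0:ℂ) ↑t ↑(a 1*t) = a 1
          rw [CR_infty, sub_zero, sub_zero]
          exact mul_div_cancel_right₀ _ ht0
        · show CR ∞ ↑(1:ℂ) ↑(a 1*t) ↑(a 1*a 2*t+1-a 2) = a 2
          rw [CR_infty, div_eq_iff (sub_ne_zero.mpr hu1)]; ring
        · show CR ↑(0:ℂ) ↑t ↑(a 1*a 2*t+1-a 2)
            ↑(((a 0-1+a 4)*t-a 4*a 0)/(a 4*t+(a 0-1-a 4*a 0))) = a 3
          have hden4 : ((a 1*a 2*t+1-a 2) - t)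
              * ((((a 0-1+a 4)*t-a 4*a 0)/(a 4*t+(a 0-1-a 4*a 0))) - 0) ≠ 0 :=
            mul_ne_zero (sub_ne_zero.mpr htv) (by rw [sub_zero]; exact hw0)
          rw [CR_fin, div_eq_iff hden4]
          linear_combination h4key
        · show CR ↑(1:ℂ) ↑t ↑(a 0)
            ↑(((a 0-1+a 4)*t-a 4*a 0)/(a 4*t+(a 0-1-a 4*a 0))) = a 4
          have hden5 : ((a 0) - t)
              * ((((a 0-1+a 4)*t-a 4*a 0)/(a 4*t+(a 0-1-a 4*a 0))) - 1) ≠ 0 :=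
            mul_ne_zero (sub_ne_zero.mpr (Ne.symm hty)) (sub_ne_zero.mpr hw1)
          rw [CR_fin, div_eq_iff hden5]
          linear_combination hW
    constructor
    · rw [hS]
      exact Set.Finite.image _ P.roots.toFinset.finite_toSet
    · rw [hS, Set.ncard_image_of_injective _
        (fun s u h => OnePoint.coe_eq_coe.mp (congrFun h 3)),
        Set.ncard_coe_finset, hcard]
end
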